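/- Every zero z of the monic right quaternionic polynomial f_r(z) = zⁿ + z^{n−1} q_n + ⋯ + z q₂ + q₁ satisfies |z| ≤ 1 + max_{1≤i≤n} |q_i| (Cauchy bound for quaternionic polynomials). -/

import Mathlib

open scoped Quaternion
open Finset Matrix

noncomputable def specNorm {n : ℕ} (A : Matrix (Fin n) (Fin n) ℍ[ℝ]) : ℝ :=
  sSup {r : ℝ | ∃ x : Fin n → ℍ[ℝ], x ≠ 0 ∧
    r = Real.sqrt (∑ i, ‖A.mulVec x i‖ ^ 2) / Real.sqrt (∑ i, ‖x i‖ ^ 2)}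

theorem cauchy_bound (n : ℕ) (hn : 1 ≤ n) (q : ℕ → ℍ[ℝ]) (z : ℍ[ℝ])
    (hz : z ^ n + ∑ i ∈ Finset.Icc 1 n, z ^ (i - 1) * q i = 0) :
    ‖z‖ ≤ 1 + (Finset.Icc 1 n).sup' (Finset.nonempty_Icc.mpr hn) (fun i => ‖q i‖) := by
  set M := (Finset.Icc 1 n).sup' (Finset.nonempty_Icc.mpr hn) (fun i => ‖q i‖) with hMdef
  by_contra hcon
  push_neg at hcon
  have hM0 : 0 ≤ M := by
    rw [hMdef]
    exact le_trans (norm_nonneg (q 1))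
      (Finset.le_sup' (fun i => ‖q i‖) (Finset.mem_Icc.mpr ⟨le_refl 1, hn⟩))
  have hz1 : 1 < ‖z‖ := by linarith
  have hzn : z ^ n = -∑ i ∈ Finset.Icc 1 n, z ^ (i - 1) * q i :=
    eq_neg_of_add_eq_zero_left hz
  have key : ‖z‖ ^ n ≤ ∑ i ∈ Finset.Icc 1 n, ‖z‖ ^ (i - 1) * M := by
    calc ‖z‖ ^ n = ‖z ^ n‖ := (norm_pow z n).symm
      _ = ‖∑ i ∈ Finset.Icc 1 n, z ^ (i - 1) * q i‖ := by rw [hzn, norm_neg]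
      _ ≤ ∑ i ∈ Finset.Icc 1 n, ‖z ^ (i - 1) * q i‖ := norm_sum_le _ _
      _ ≤ ∑ i ∈ Finset.Icc 1 n, ‖z‖ ^ (i - 1) * M := by
          refine Finset.sum_le_sum fun i hi => ?_
          rw [norm_mul, norm_pow]
          have : ‖q i‖ ≤ M := by rw [hMdef]; exact Finset.le_sup' (fun i => ‖q i‖) hi
          exact mul_le_mul_of_nonneg_left this (by positivity)
  have hS : ∑ i ∈ Finset.Icc 1 n, ‖z‖ ^ (i - 1) * M
      = (∑ j ∈ Finset.range n, ‖z‖ ^ j) * M := by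
    rw [← Finset.Ico_add_one_right_eq_Icc, Finset.sum_Ico_eq_sum_range, Finset.sum_mul]
    simp
  set S := ∑ j ∈ Finset.range n, ‖z‖ ^ j with hSdef
  have hS1 : 1 ≤ S := by
    have := Finset.single_le_sum (f := fun j => ‖z‖ ^ j)
      (fun j _ => by positivity) (Finset.mem_range.mpr hn)
    simpa using this
  have hgeom : S * (‖z‖ - 1) = ‖z‖ ^ n - 1 := geom_sum_mul ‖z‖ n
  rw [hS] at key
  nlinarith [key, hgeom, hS1, hcon]
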